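/- Let u ∈ VT_a(k+1;k) and let v be any binary vector of length k obtained from u by first deleting one bit and then inserting one bit (at arbitrary positions). Then exactly one of the following holds: v = u, or v ∉ VT_a(k+1;k). -/

import Mathlib

def vtSyn (l : List Bool) : ℕ :=
  ∑ i : Fin l.length, ((i : ℕ) + 1) * (if l.get i then 1 else 0)

def wtB : List Bool → ℕ
  | [] => 0
  | x :: t => (if x then 1 else 0) + wtB t

lemma get_cons_succ' (x : Bool) (t : List Bool) (i : Fin t.length) :
    (x :: t).get i.succ = t.get i := rfl

lemma wtB_eq (l : List Bool) : wtB l = ∑ i : Fin l.length, (if l.get i then 1 else 0) := by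
  induction l with
  | nil => rfl
  | cons x t ih =>
    simp only [wtB, ih, List.length_cons, Fin.sum_univ_succ, get_cons_succ', List.get_cons_zero]
    rfl

lemma vtSyn_cons (x : Bool) (l : List Bool) :
    vtSyn (x :: l) = (if x then 1 else 0) + vtSyn l + wtB l := by
  unfold vtSyn
  rw [wtB_eq]
  simp only [List.length_cons, Fin.sum_univ_succ, get_cons_succ', List.get_cons_zero,
    Fin.val_zero, Fin.val_succ, zero_add, one_mul]
  rw [add_assoc]
  congr 1
  rw [← Finset.sum_add_distrib]
  exact Finset.sum_congr rfl fun i _ => by ring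

lemma wtB_cons (x : Bool) (t : List Bool) :
    wtB (x :: t) = (if x then 1 else 0) + wtB t := rfl

lemma wtB_append (a b : List Bool) : wtB (a ++ b) = wtB a + wtB b := by
  induction a with
  | nil => simp [wtB]
  | cons x t ih => rw [List.cons_append, wtB_cons, wtB_cons, ih]; ring

lemma vtSyn_append (a b : List Bool) :
    vtSyn (a ++ b) = vtSyn a + vtSyn b + a.length * wtB b := by
  induction a with
  | nil => simp [vtSyn]
  | cons x t ih =>
    simp only [List.cons_append, vtSyn_cons, ih, wtB_append, List.length_cons]
    ring

lemma wtB_le (l : List Bool) : wtB l ≤ l.length := by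
  induction l with
  | nil => simp [wtB]
  | cons x t ih => simp only [wtB, List.length_cons]; split <;> omega

lemma all_true (l : List Bool) (h : wtB l = l.length) : l ++ [true] = true :: l := by
  induction l with
  | nil => rfl
  | cons x t ih =>
    have ht := wtB_le t
    cases x with
    | false => exfalso; simp [wtB] at h; omega
    | true =>
      have hh : wtB t = t.length := by simp [wtB] at h; omega
      simpa using ih hh

lemma all_false (l : List Bool) (h : wtB l = 0) : l ++ [false] = false :: l := by
  induction l with
  | nil => rfl
  | cons x t ih =>
    cases x with
    | true => exfalso; simp [wtB] at h
    | false =>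
      have hh : wtB t = 0 := by simp [wtB] at h; omega
      simpa using ih hh

lemma insertIdx_eq (n : ℕ) (a : Bool) (l : List Bool) (h : n ≤ l.length) :
    l.insertIdx n a = l.take n ++ a :: l.drop n := by
  induction n generalizing l with
  | zero => simp
  | succ m ih =>
    cases l with
    | nil => simp at h
    | cons x t =>
      simp only [List.insertIdx_succ_cons, List.take_succ_cons, List.drop_succ_cons,
        List.cons_append]
      rw [ih t (by simpa using h)]

lemma int_eq_zero_of_dvd_of_abs_lt {n d : ℤ} (hd : n ∣ d) (h : |d| < n) : d = 0 := by
  by_contra h0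
  have h1 : n ∣ |d| := (dvd_abs n d).mpr hd
  have h2 : 0 < |d| := abs_pos.mpr h0
  exact absurd (Int.le_of_dvd h2 h1) (not_le.mpr h)

theorem stmt2 (k : ℕ) (hk : 0 < k) (a : ZMod (k + 1)) (u v : List Bool)
    (hu : u.length = k) (hua : ((vtSyn u : ℕ) : ZMod (k + 1)) = a)
    (j₁ j₂ : ℕ) (b : Bool) (hj₁ : j₁ < k) (hj₂ : j₂ ≤ k - 1)
    (hv : v = (u.eraseIdx j₁).insertIdx j₂ b) (hvl : v.length = k) :
    Xor' (v = u) (¬ ((vtSyn v : ℕ) : ZMod (k + 1)) = a) := by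
  by_cases hvu : v = u
  · exact Or.inl ⟨hvu, not_not_intro (by rw [hvu]; exact hua)⟩
  refine Or.inr ⟨fun hva => hvu ?_, hvu⟩
  -- derive v = u from syndrome congruence
  have hcong : ((vtSyn v : ℕ) : ZMod (k + 1)) = ((vtSyn u : ℕ) : ZMod (k + 1)) :=
    hva.trans hua.symm
  have hm : vtSyn v ≡ vtSyn u [MOD k + 1] := (ZMod.natCast_eq_natCast_iff _ _ _).mp hcong
  have hdvd : ((k : ℤ) + 1) ∣ (vtSyn u : ℤ) - (vtSyn v : ℤ) := by
    have := hm.dvd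
    push_cast at this ⊢
    exact this
  have hL : j₁ < u.length := by omega
  obtain ⟨c, hcdef⟩ : ∃ c : Bool, u = u.take j₁ ++ c :: u.drop (j₁ + 1) := by
    refine ⟨u.get ⟨j₁, hL⟩, ?_⟩
    conv_lhs => rw [← List.take_append_drop j₁ u]
    rw [List.drop_eq_getElem_cons hL]
    rfl
  have hxlen : (u.take j₁).length = j₁ := by simp [hu]; omega
  have hzlen : (u.drop (j₁ + 1)).length = k - j₁ - 1 := by simp [hu]; omega
  have hwdec : u.eraseIdx j₁ = u.take j₁ ++ u.drop (j₁ + 1) :=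
    List.eraseIdx_eq_take_drop_succ u j₁
  rw [hwdec] at hv
  rw [insertIdx_eq j₂ b _ (by simp [hxlen, hzlen]; omega)] at hv
  by_cases hle : j₁ ≤ j₂
  · -- insertion after (or at) deletion point
    set x := u.take j₁ with hx
    set z := u.drop (j₁ + 1) with hz
    set y₁ := z.take (j₂ - j₁) with hy₁
    set y₂ := z.drop (j₂ - j₁) with hy₂
    have h1len : y₁.length = j₂ - j₁ := by
      simp [hy₁, hzlen]; omega
    have hzy : z = y₁ ++ y₂ := (List.take_append_drop _ z).symm
    have hudec : u = x ++ c :: (y₁ ++ y₂) := by rw [← hzy]; exact hcdef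
    have htk : (x ++ z).take j₂ = x ++ y₁ := by
      rw [List.take_append, List.take_of_length_le (by omega), hxlen]
    have hdr : (x ++ z).drop j₂ = y₂ := by
      rw [List.drop_append, List.drop_eq_nil_of_le (by omega), hxlen]
      simp [hy₂]
    have hvdec : v = x ++ (y₁ ++ b :: y₂) := by
      rw [hv, htk, hdr, List.append_assoc]
    have hwle := wtB_le y₁
    cases c <;> cases b
    · -- c = false, b = false : wtB y₁ = 0
      have h1 : (vtSyn u : ℤ) - (vtSyn v : ℤ) = (wtB y₁ : ℤ) := by
        rw [hudec, hvdec]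
        push_cast [vtSyn_append, vtSyn_cons, wtB_append, wtB_cons]
        try simp only [eq_self_iff_true, if_true, Bool.false_eq_true, if_false]
        ring
      have h2 := int_eq_zero_of_dvd_of_abs_lt hdvd
        (by rw [h1, abs_lt]; constructor <;> omega)
      rw [h1] at h2
      have hw0 : wtB y₁ = 0 := by exact_mod_cast h2
      rw [hvdec, hudec]
      congr 1
      calc y₁ ++ false :: y₂ = (y₁ ++ [false]) ++ y₂ := by simp
        _ = (false :: y₁) ++ y₂ := by rw [all_false y₁ hw0]
        _ = false :: (y₁ ++ y₂) := rfl
    · -- c = false, b = true : contradiction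
      exfalso
      have h1 : (vtSyn u : ℤ) - (vtSyn v : ℤ) =
          (wtB y₁ : ℤ) - 1 - y₁.length - x.length := by
        rw [hudec, hvdec]
        push_cast [vtSyn_append, vtSyn_cons, wtB_append, wtB_cons]
        try simp only [eq_self_iff_true, if_true, Bool.false_eq_true, if_false]
        ring
      have h2 := int_eq_zero_of_dvd_of_abs_lt hdvd
        (by rw [h1, abs_lt]; constructor <;> omega)
      rw [h1] at h2
      omega
    · -- c = true, b = false : contradiction
      exfalso
      have h1 : (vtSyn u : ℤ) - (vtSyn v : ℤ) =
          (wtB y₁ : ℤ) + 1 + x.length := by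
        rw [hudec, hvdec]
        push_cast [vtSyn_append, vtSyn_cons, wtB_append, wtB_cons]
        try simp only [eq_self_iff_true, if_true, Bool.false_eq_true, if_false]
        ring
      have h2 := int_eq_zero_of_dvd_of_abs_lt hdvd
        (by rw [h1, abs_lt]; constructor <;> omega)
      rw [h1] at h2
      omega
    · -- c = true, b = true : wtB y₁ = y₁.length
      have h1 : (vtSyn u : ℤ) - (vtSyn v : ℤ) = (wtB y₁ : ℤ) - y₁.length := by
        rw [hudec, hvdec]
        push_cast [vtSyn_append, vtSyn_cons, wtB_append, wtB_cons]
        try simp only [eq_self_iff_true, if_true, Bool.false_eq_true, if_false]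
        ring
      have h2 := int_eq_zero_of_dvd_of_abs_lt hdvd
        (by rw [h1, abs_lt]; constructor <;> omega)
      rw [h1] at h2
      have hw1 : wtB y₁ = y₁.length := by omega
      rw [hvdec, hudec]
      congr 1
      calc y₁ ++ true :: y₂ = (y₁ ++ [true]) ++ y₂ := by simp
        _ = (true :: y₁) ++ y₂ := by rw [all_true y₁ hw1]
        _ = true :: (y₁ ++ y₂) := rfl
  · -- insertion before deletion point: j₂ < j₁
    push_neg at hle
    set z := u.drop (j₁ + 1) with hz
    set x₁ := u.take j₂ with hx₁
    set x₂ := (u.take j₁).drop j₂ with hx₂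
    have hx1len : x₁.length = j₂ := by simp [hx₁, hu]; omega
    have hx2len : x₂.length = j₁ - j₂ := by simp [hx₂, hu]; omega
    have htt : (u.take j₁).take j₂ = x₁ := by
      rw [hx₁, List.take_take]; congr 1; omega
    have hxsplit : u.take j₁ = x₁ ++ x₂ := by
      conv_lhs => rw [← List.take_append_drop j₂ (u.take j₁)]
      rw [htt]
    have hudec : u = x₁ ++ (x₂ ++ c :: z) := by
      conv_lhs => rw [hcdef, hxsplit]
      rw [List.append_assoc]
    have htk : (u.take j₁ ++ z).take j₂ = x₁ := by
      rw [List.take_append, htt, hxlen,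
        show j₂ - j₁ = 0 by omega]
      simp
    have hdr : (u.take j₁ ++ z).drop j₂ = x₂ ++ z := by
      rw [List.drop_append, hxlen, show j₂ - j₁ = 0 by omega]
      simp [hx₂]
    have hvdec : v = x₁ ++ b :: (x₂ ++ z) := by
      rw [hv, htk, hdr]
    have hwle := wtB_le x₂
    cases c <;> cases b
    · -- c = false, b = false : wtB x₂ = 0
      have h1 : (vtSyn u : ℤ) - (vtSyn v : ℤ) = -(wtB x₂ : ℤ) := by
        rw [hudec, hvdec]
        push_cast [vtSyn_append, vtSyn_cons, wtB_append, wtB_cons]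
        try simp only [eq_self_iff_true, if_true, Bool.false_eq_true, if_false]
        ring
      have h2 := int_eq_zero_of_dvd_of_abs_lt hdvd
        (by rw [h1, abs_lt]; constructor <;> omega)
      rw [h1] at h2
      have hw0 : wtB x₂ = 0 := by omega
      rw [hvdec, hudec]
      congr 1
      calc false :: (x₂ ++ z) = (false :: x₂) ++ z := rfl
        _ = (x₂ ++ [false]) ++ z := by rw [all_false x₂ hw0]
        _ = x₂ ++ false :: z := by simp
    · -- c = false, b = true : contradiction
      exfalso
      have h1 : (vtSyn u : ℤ) - (vtSyn v : ℤ) =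
          -(x₁.length : ℤ) - 1 - wtB x₂ := by
        rw [hudec, hvdec]
        push_cast [vtSyn_append, vtSyn_cons, wtB_append, wtB_cons]
        try simp only [eq_self_iff_true, if_true, Bool.false_eq_true, if_false]
        ring
      have h2 := int_eq_zero_of_dvd_of_abs_lt hdvd
        (by rw [h1, abs_lt]; constructor <;> omega)
      rw [h1] at h2
      omega
    · -- c = true, b = false : contradiction
      exfalso
      have h1 : (vtSyn u : ℤ) - (vtSyn v : ℤ) =
          (x₂.length : ℤ) + x₁.length + 1 - wtB x₂ := by
        rw [hudec, hvdec]
        push_cast [vtSyn_append, vtSyn_cons, wtB_append, wtB_cons]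
        try simp only [eq_self_iff_true, if_true, Bool.false_eq_true, if_false]
        ring
      have h2 := int_eq_zero_of_dvd_of_abs_lt hdvd
        (by rw [h1, abs_lt]; constructor <;> omega)
      rw [h1] at h2
      omega
    · -- c = true, b = true : wtB x₂ = x₂.length
      have h1 : (vtSyn u : ℤ) - (vtSyn v : ℤ) = (x₂.length : ℤ) - wtB x₂ := by
        rw [hudec, hvdec]
        push_cast [vtSyn_append, vtSyn_cons, wtB_append, wtB_cons]
        try simp only [eq_self_iff_true, if_true, Bool.false_eq_true, if_false]
        ring
      have h2 := int_eq_zero_of_dvd_of_abs_lt hdvd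
        (by rw [h1, abs_lt]; constructor <;> omega)
      rw [h1] at h2
      have hw1 : wtB x₂ = x₂.length := by omega
      rw [hvdec, hudec]
      congr 1
      calc true :: (x₂ ++ z) = (true :: x₂) ++ z := rfl
        _ = (x₂ ++ [true]) ++ z := by rw [all_true x₂ hw1]
        _ = x₂ ++ true :: z := by simp
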